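/- Let Λ be a compact invariant set with a dominated splitting T_Λ M = E ⊕ F with respect to the tangent flow of a C¹ vector field X, and suppose X(x) ∈ F(x) for every x ∈ Λ. Then the normal bundle over Λ \ Sing(X) admits a dominated splitting of index dim E with respect to the linear Poincaré flow. -/

import Mathlib

open Set Metric Filter Module

/-- A continuous flow on a metric space. -/
def IsFlow {M : Type*} [MetricSpace M] (φ : ℝ → M → M) : Prop :=
  Continuous (fun p : ℝ × M => φ p.1 p.2) ∧ (∀ x, φ 0 x = x) ∧
    ∀ s t x, φ (s + t) x = φ s (φ t x)

variable {M : Type*} [MetricSpace M]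
variable {V : Type*} [NormedAddCommGroup V] [NormedSpace ℝ V]

/-- A linear cocycle over the flow `φ`, modelling the tangent flow `Φ_t`. -/
def IsCocycleOver (φ : ℝ → M → M) (A : ℝ → M → V →L[ℝ] V) : Prop :=
  (∀ x, A 0 x = ContinuousLinearMap.id ℝ V) ∧
    ∀ s t x, A (s + t) x = (A s (φ t x)).comp (A t x)

/-- Invariance of a subbundle `E` under the cocycle `A` over points of `Λ`. -/
def InvariantBundle (φ : ℝ → M → M) (A : ℝ → M → V →L[ℝ] V) (Λ : Set M)
    (E : M → Submodule ℝ V) : Prop :=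
  ∀ x ∈ Λ, ∀ t : ℝ, ∀ v ∈ E x, A t x v ∈ E (φ t x)

/-- A dominated splitting `E ⊕ F` over `Λ` for the cocycle `A` over the flow `φ`:
the bundles are complementary, invariant, and satisfy
`‖Φ_t|_{E(x)}‖ · ‖Φ_{−t}|_{F(φ_t(x))}‖ ≤ C e^{−λ t}` (in ratio form). -/
def DominatedOn (φ : ℝ → M → M) (A : ℝ → M → V →L[ℝ] V) (Λ : Set M)
    (E F : M → Submodule ℝ V) : Prop :=
  (∀ x ∈ Λ, E x ⊓ F x = ⊥ ∧ E x ⊔ F x = ⊤) ∧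
    InvariantBundle φ A Λ E ∧ InvariantBundle φ A Λ F ∧
    ∃ C > 0, ∃ lam > 0, ∀ x ∈ Λ, ∀ t > 0, ∀ u ∈ E x, ∀ v ∈ F x,
      ‖A t x u‖ * ‖v‖ ≤ C * Real.exp (-lam * t) * (‖u‖ * ‖A t x v‖)

/-- The linear Poincaré flow: the orthogonal projection of the tangent flow to the
normal space of the vector field at `φ_t(x)`. -/
noncomputable def linPoincare {W : Type*} [NormedAddCommGroup W] [InnerProductSpace ℝ W]
    [FiniteDimensional ℝ W] (φ : ℝ → W → W) (A : ℝ → W → W →L[ℝ] W) (X : W → W)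
    (t : ℝ) (x : W) (v : W) : W :=
  (((ℝ ∙ X (φ t x))ᗮ).orthogonalProjectionOnto (A t x v) : W)

section Aux

variable {W : Type*} [NormedAddCommGroup W] [InnerProductSpace ℝ W] [FiniteDimensional ℝ W]

/-- Orthogonal projection onto the normal space of `X x`, as a map `W →L[ℝ] W`. -/
noncomputable def normProj (X : W → W) (x : W) : W →L[ℝ] W :=
  ((ℝ ∙ X x)ᗮ).subtypeL.comp ((ℝ ∙ X x)ᗮ).orthogonalProjectionOnto

lemma normProj_apply (X : W → W) (x v : W) :
    normProj X x v = (((ℝ ∙ X x)ᗮ).orthogonalProjectionOnto v : W) := rfl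

lemma normProj_mem (X : W → W) (x v : W) : normProj X x v ∈ (ℝ ∙ X x)ᗮ :=
  (((ℝ ∙ X x)ᗮ).orthogonalProjectionOnto v).2

lemma sub_normProj_mem (X : W → W) (x v : W) : v - normProj X x v ∈ ℝ ∙ X x := by
  have h := Submodule.sub_starProjection_mem_orthogonal (K := (ℝ ∙ X x)ᗮ) v
  rwa [Submodule.orthogonal_orthogonal] at h

lemma normProj_eq_self (X : W → W) (x : W) {v : W} (hv : v ∈ (ℝ ∙ X x)ᗮ) :
    normProj X x v = v :=
  Submodule.starProjection_eq_self_iff.mpr hv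

lemma normProj_eq_zero (X : W → W) (x : W) {v : W} (hv : v ∈ ℝ ∙ X x) :
    normProj X x v = 0 := by
  have h : ((ℝ ∙ X x)ᗮ).orthogonalProjectionOnto v = 0 :=
    Submodule.orthogonalProjectionOnto_orthogonal_apply_eq_zero hv
  rw [normProj_apply, h, Submodule.coe_zero]

lemma normProj_norm_le (X : W → W) (x v : W) : ‖normProj X x v‖ ≤ ‖v‖ := by
  rw [normProj_apply]
  have h1 : ‖((ℝ ∙ X x)ᗮ).orthogonalProjectionOnto v‖ ≤ ‖((ℝ ∙ X x)ᗮ).orthogonalProjectionOnto‖ * ‖v‖ :=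
    ContinuousLinearMap.le_opNorm _ v
  have h2 : ‖((ℝ ∙ X x)ᗮ).orthogonalProjectionOnto‖ ≤ 1 := Submodule.orthogonalProjectionOnto_norm_le _
  have h0 : ‖(((ℝ ∙ X x)ᗮ).orthogonalProjectionOnto v : W)‖ =
      ‖((ℝ ∙ X x)ᗮ).orthogonalProjectionOnto v‖ := rfl
  rw [h0]
  nlinarith [norm_nonneg v, norm_nonneg (((ℝ ∙ X x)ᗮ).orthogonalProjectionOnto v)]

lemma norm_le_sub_smul (X : W → W) (x : W) {v : W} (hv : v ∈ (ℝ ∙ X x)ᗮ) (c : ℝ) :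
    ‖v‖ ≤ ‖v - c • X x‖ := by
  have hin : (inner ℝ v (c • X x) : ℝ) = 0 := by
    have h := hv (c • X x) (Submodule.smul_mem _ c (Submodule.mem_span_singleton_self _))
    rwa [real_inner_comm] at h
  have h := norm_sub_sq_real v (c • X x)
  rw [hin] at h
  have h2 : ‖v‖ ^ 2 ≤ ‖v - c • X x‖ ^ 2 := by nlinarith [sq_nonneg ‖c • X x‖]
  exact (pow_le_pow_iff_left₀ (norm_nonneg _) (norm_nonneg _) two_ne_zero).mp h2

lemma linPoincare_eq (φ : ℝ → W → W) (A : ℝ → W → W →L[ℝ] W) (X : W → W)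
    (t : ℝ) (x v : W) : linPoincare φ A X t x v = normProj X (φ t x) (A t x v) := rfl

end Aux

/-- If a compact invariant set `Λ` has a dominated splitting `E ⊕ F` for the tangent flow
with `X(x) ∈ F(x)` everywhere, then the normal bundle over `Λ \ Sing(X)` has a dominated
splitting of index `dim E` for the linear Poincaré flow. -/
theorem normal_dominated_of_tangent_dominated
    {W : Type*} [NormedAddCommGroup W] [InnerProductSpace ℝ W] [FiniteDimensional ℝ W]
    (φ : ℝ → W → W) (hφ : IsFlow φ) (A : ℝ → W → W →L[ℝ] W)
    (hA : IsCocycleOver φ A) (hAc : Continuous fun p : ℝ × W => A p.1 p.2)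
    (X : W → W) (hXc : Continuous X)
    (hXinv : ∀ (x : W) (t : ℝ), A t x (X x) = X (φ t x))
    (Λ : Set W) (hΛc : IsCompact Λ) (hΛi : ∀ t : ℝ, φ t '' Λ = Λ)
    (E F : W → Submodule ℝ W) (hEF : DominatedOn φ A Λ E F)
    (hXF : ∀ x ∈ Λ, X x ∈ F x) :
    ∃ Δs Δu : W → Submodule ℝ W,
      (∀ x ∈ Λ, X x ≠ 0 →
        Δs x ⊓ Δu x = ⊥ ∧ Δs x ⊔ Δu x = (ℝ ∙ X x)ᗮ ∧
        finrank ℝ (Δs x) = finrank ℝ (E x) ∧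
        (∀ t : ℝ, ∀ v ∈ Δs x, linPoincare φ A X t x v ∈ Δs (φ t x)) ∧
        (∀ t : ℝ, ∀ v ∈ Δu x, linPoincare φ A X t x v ∈ Δu (φ t x))) ∧
      ∃ C > (0 : ℝ), ∃ lam > (0 : ℝ), ∀ x ∈ Λ, X x ≠ 0 → ∀ t > (0 : ℝ),
        ∀ u ∈ Δs x, ∀ v ∈ Δu x,
          ‖linPoincare φ A X t x u‖ * ‖v‖ ≤
            C * Real.exp (-lam * t) * (‖u‖ * ‖linPoincare φ A X t x v‖) := by
  classical
  obtain ⟨hcomp, hEinv, hFinv, C0, hC0, lam, hlam, hdom⟩ := hEF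
  obtain ⟨hA0, hAcoc⟩ := hA
  -- orbit stays in Λ
  have hmemΛ : ∀ x ∈ Λ, ∀ t : ℝ, φ t x ∈ Λ := by
    intro x hx t
    rw [← hΛi t]
    exact ⟨x, hx, rfl⟩
  -- span of X x is inside F x
  have hspanF : ∀ x ∈ Λ, (ℝ ∙ X x) ≤ F x := by
    intro x hx
    rw [Submodule.span_singleton_le_iff_mem]
    exact hXF x hx
  -- inverse of the cocycle
  have hAinv : ∀ (t : ℝ) (x v : W), A (-t) (φ t x) (A t x v) = v := by
    intro t x v
    have h := hAcoc (-t) t x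
    rw [neg_add_cancel, hA0] at h
    have h2 := congrArg (fun f : W →L[ℝ] W => f v) h
    simpa using h2.symm
  -- choose the time T
  set T : ℝ := max 1 (Real.log (8 * C0) / lam) with hT
  have hT1 : (1 : ℝ) ≤ T := le_max_left _ _
  have hTpos : (0 : ℝ) < T := lt_of_lt_of_le one_pos hT1
  have hTexp : C0 * Real.exp (-lam * T) ≤ 1 / 8 := by
    have h1 : Real.log (8 * C0) / lam ≤ T := le_max_right _ _
    have h2 : Real.log (8 * C0) ≤ lam * T := by
      rw [div_le_iff₀ hlam] at h1
      nlinarith [h1]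
    have h3 : Real.exp (-lam * T) ≤ Real.exp (-Real.log (8 * C0)) := by
      apply Real.exp_le_exp.mpr
      linarith
    have h4 : Real.exp (-Real.log (8 * C0)) = (8 * C0)⁻¹ := by
      rw [Real.exp_neg, Real.exp_log (by linarith)]
    rw [h4] at h3
    have h5 : C0 * Real.exp (-lam * T) ≤ C0 * (8 * C0)⁻¹ :=
      mul_le_mul_of_nonneg_left h3 (le_of_lt hC0)
    have h6 : C0 * (8 * C0)⁻¹ = 1 / 8 := by
      field_simp
    linarith
  -- uniform bound for ‖A T x‖ and ‖A (-T) x‖ over Λ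
  have hbound : ∀ s : ℝ, ∃ K : ℝ, ∀ x ∈ Λ, ‖A s x‖ ≤ K := by
    intro s
    have hc : ContinuousOn (fun x : W => A s x) Λ :=
      (hAc.comp (continuous_const.prodMk continuous_id)).continuousOn
    exact hΛc.exists_bound_of_continuousOn hc
  obtain ⟨K1, hK1⟩ := hbound T
  obtain ⟨K2, hK2⟩ := hbound (-T)
  set K : ℝ := max (max K1 K2) 1 with hKdef
  have hKone : (1 : ℝ) ≤ K := le_max_right _ _
  have hKpos : (0 : ℝ) < K := lt_of_lt_of_le one_pos hKone
  have hKT : ∀ x ∈ Λ, ‖A T x‖ ≤ K := fun x hx =>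
    (hK1 x hx).trans ((le_max_left K1 K2).trans (le_max_left _ _))
  have hKnegT : ∀ x ∈ Λ, ‖A (-T) x‖ ≤ K := fun x hx =>
    (hK2 x hx).trans ((le_max_right K1 K2).trans (le_max_left _ _))
  -- lower bound : ‖f‖ ≤ K * ‖A T x f‖ for x ∈ Λ
  have hlower : ∀ x ∈ Λ, ∀ f : W, ‖f‖ ≤ K * ‖A T x f‖ := by
    intro x hx f
    have h1 : ‖A (-T) (φ T x) (A T x f)‖ ≤ ‖A (-T) (φ T x)‖ * ‖A T x f‖ :=
      ContinuousLinearMap.le_opNorm _ _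
    rw [hAinv T x f] at h1
    have h2 : ‖A (-T) (φ T x)‖ ≤ K := hKnegT _ (hmemΛ x hx T)
    nlinarith [norm_nonneg (A T x f)]
  -- uniform separation between E and F
  have hsep : ∀ x ∈ Λ, ∀ e ∈ E x, ∀ f ∈ F x, ‖e‖ ≤ 4 * K ^ 2 * ‖e - f‖ := by
    intro x hx e he f hf
    rcases lt_or_ge ‖f‖ (‖e‖ / 2) with hcase | hcase
    · -- f is small compared with e
      have h1 : ‖e‖ - ‖f‖ ≤ ‖e - f‖ := norm_sub_norm_le e f
      have hh : (0:ℝ) ≤ (4 * K ^ 2 - 2) * ‖e - f‖ :=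
        mul_nonneg (by nlinarith) (norm_nonneg (e - f))
      nlinarith [norm_nonneg (e - f)]
    · -- f is comparable with e: use domination at time T
      rcases eq_or_lt_of_le (norm_nonneg f) with hf0 | hf0
      · -- f = 0, hence e = 0
        have he0 : ‖e‖ ≤ 0 := by nlinarith
        have : ‖e‖ = 0 := le_antisymm he0 (norm_nonneg e)
        have hh : (0:ℝ) ≤ 4 * K ^ 2 * ‖e - f‖ := by positivity
        linarith
      · have hd := hdom x hx T hTpos e he f hf
        -- ‖A T x e‖ * ‖f‖ ≤ (1/8) * ‖e‖ * ‖A T x f‖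
        have hd2 : ‖A T x e‖ * ‖f‖ ≤ (1 / 8) * (‖e‖ * ‖A T x f‖) := by
          have hexp : C0 * Real.exp (-lam * T) * (‖e‖ * ‖A T x f‖) ≤
              (1 / 8) * (‖e‖ * ‖A T x f‖) :=
            mul_le_mul_of_nonneg_right hTexp
              (mul_nonneg (norm_nonneg _) (norm_nonneg _))
          linarith
        -- ‖A T x e‖ ≤ (1/4) * ‖A T x f‖
        have hd3 : ‖A T x e‖ ≤ (1 / 4) * ‖A T x f‖ := by
          have h8 : ‖e‖ * ‖A T x f‖ ≤ 2 * ‖f‖ * ‖A T x f‖ := by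
            nlinarith [norm_nonneg (A T x f)]
          nlinarith
        have h2 : ‖A T x f‖ - ‖A T x e‖ ≤ ‖A T x e - A T x f‖ := by
          have := norm_sub_norm_le (A T x f) (A T x e)
          rwa [norm_sub_rev] at this
        have h3 : A T x e - A T x f = A T x (e - f) := (map_sub (A T x) e f).symm
        have h4 : ‖A T x (e - f)‖ ≤ K * ‖e - f‖ := by
          have := ContinuousLinearMap.le_opNorm (A T x) (e - f)
          nlinarith [hKT x hx, norm_nonneg (e - f)]
        have h5 : ‖f‖ ≤ K * ‖A T x f‖ := hlower x hx f
        -- combine: K * ‖e - f‖ ≥ (3/4) ‖A T x f‖ ≥ (3/4) ‖f‖ / K ≥ (3/8) ‖e‖ / K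
        rw [h3] at h2
        -- K * ‖e-f‖ ≥ ‖A T x f‖ - ‖A T x e‖ ≥ (3/4)‖A T x f‖
        have h6 : (3 / 4) * ‖A T x f‖ ≤ K * ‖e - f‖ := by linarith
        -- multiply by K:  (3/4) ‖f‖ ≤ (3/4) K ‖A T x f‖ ≤ K² ‖e-f‖
        have h7 : (3 / 4) * ‖f‖ ≤ K ^ 2 * ‖e - f‖ := by nlinarith
        nlinarith
  -- projection of E-vectors does not collapse
  have hEproj : ∀ x ∈ Λ, ∀ e ∈ E x, ‖e‖ ≤ 4 * K ^ 2 * ‖normProj X x e‖ := by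
    intro x hx e he
    have hmem : e - normProj X x e ∈ F x := hspanF x hx (sub_normProj_mem X x e)
    have h := hsep x hx e he (e - normProj X x e) hmem
    simpa using h
  -- the invariance identity for the linear Poincaré flow on projections
  have hPA : ∀ (t : ℝ) (x e : W),
      linPoincare φ A X t x (normProj X x e) = normProj X (φ t x) (A t x e) := by
    intro t x e
    obtain ⟨c, hc⟩ := Submodule.mem_span_singleton.mp (sub_normProj_mem X x e)
    have h1 : normProj X x e = e - c • X x := by rw [hc]; abel
    rw [linPoincare_eq, h1, map_sub, map_smul, hXinv x t]
    rw [map_sub, map_smul]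
    have h2 : normProj X (φ t x) (X (φ t x)) = 0 :=
      normProj_eq_zero X (φ t x) (Submodule.mem_span_singleton_self _)
    rw [h2, smul_zero, sub_zero]
  refine ⟨fun x => (E x).map (normProj X x).toLinearMap,
    fun x => F x ⊓ (ℝ ∙ X x)ᗮ, ?_, ?_⟩
  · -- structural statements
    intro x hx hXne
    obtain ⟨hEFbot, hEFtop⟩ := hcomp x hx
    have hker : ∀ e ∈ E x, normProj X x e = 0 → e = 0 := by
      intro e he h0
      have h1 : e ∈ ℝ ∙ X x := by
        have := sub_normProj_mem X x e
        rwa [h0, sub_zero] at this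
      have h2 : e ∈ E x ⊓ F x := ⟨he, hspanF x hx h1⟩
      rw [hEFbot] at h2
      simpa using h2
    refine ⟨?_, ?_, ?_, ?_, ?_⟩
    · -- trivial intersection
      rw [eq_bot_iff]
      rintro w ⟨hws, hwu⟩
      obtain ⟨e, he, rfl⟩ := Submodule.mem_map.mp hws
      have hwF : (normProj X x).toLinearMap e ∈ F x := hwu.1
      have he' : e ∈ F x := by
        have h1 : e - normProj X x e ∈ F x := hspanF x hx (sub_normProj_mem X x e)
        have : e = normProj X x e + (e - normProj X x e) := by abel
        rw [this]
        exact Submodule.add_mem _ hwF h1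
      have h2 : e ∈ E x ⊓ F x := ⟨he, he'⟩
      rw [hEFbot] at h2
      have he0 : e = 0 := by simpa using h2
      simp [he0]
    · -- the sum is the whole normal space
      apply le_antisymm
      · apply sup_le
        · rintro w hw
          obtain ⟨e, _, rfl⟩ := Submodule.mem_map.mp hw
          exact normProj_mem X x e
        · exact inf_le_right
      · intro w hw
        have hwtop : w ∈ E x ⊔ F x := by rw [hEFtop]; trivial
        obtain ⟨e, he, f, hf, hef⟩ := Submodule.mem_sup.mp hwtop
        have hw1 : normProj X x e ∈ (E x).map (normProj X x).toLinearMap :=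
          Submodule.mem_map.mpr ⟨e, he, rfl⟩
        have hw2 : normProj X x f ∈ F x ⊓ (ℝ ∙ X x)ᗮ := by
          constructor
          · have h1 : f - normProj X x f ∈ F x := hspanF x hx (sub_normProj_mem X x f)
            have : normProj X x f = f - (f - normProj X x f) := by abel
            rw [this]
            exact Submodule.sub_mem _ hf h1
          · exact normProj_mem X x f
        have hsum : normProj X x e + normProj X x f = w := by
          rw [← map_add, hef]
          exact normProj_eq_self X x hw
        exact hsum ▸ Submodule.add_mem _ (Submodule.mem_sup_left hw1)
          (Submodule.mem_sup_right hw2)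
    · -- dimension count
      have hrange : (E x).map (normProj X x).toLinearMap =
          LinearMap.range ((normProj X x).toLinearMap ∘ₗ (E x).subtype) := by
        rw [LinearMap.range_comp, Submodule.range_subtype]
      have hinj : Function.Injective ((normProj X x).toLinearMap ∘ₗ (E x).subtype) := by
        intro a b hab
        have h1 : normProj X x ((a : W) - (b : W)) = 0 := by
          rw [map_sub]
          simpa [sub_eq_zero] using hab
        have h2 : (a : W) - (b : W) = 0 :=
          hker _ (Submodule.sub_mem _ a.2 b.2) h1
        exact Subtype.ext (sub_eq_zero.mp h2)
      show finrank ℝ ((E x).map (normProj X x).toLinearMap) = finrank ℝ (E x)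
      rw [hrange, LinearMap.finrank_range_of_inj hinj]
    · -- invariance of Δs
      intro t v hv
      obtain ⟨e, he, rfl⟩ := Submodule.mem_map.mp hv
      have h1 : linPoincare φ A X t x ((normProj X x).toLinearMap e) =
          normProj X (φ t x) (A t x e) := hPA t x e
      rw [h1]
      exact Submodule.mem_map.mpr ⟨A t x e, hEinv x hx t e he, rfl⟩
    · -- invariance of Δu
      intro t v hv
      obtain ⟨hvF, hvN⟩ := hv
      rw [linPoincare_eq]
      constructor
      · have h1 : A t x v ∈ F (φ t x) := hFinv x hx t v hvF
        have h2 : A t x v - normProj X (φ t x) (A t x v) ∈ F (φ t x) :=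
          hspanF _ (hmemΛ x hx t) (sub_normProj_mem X (φ t x) (A t x v))
        have : normProj X (φ t x) (A t x v) =
            A t x v - (A t x v - normProj X (φ t x) (A t x v)) := by abel
        rw [this]
        exact Submodule.sub_mem _ h1 h2
      · exact normProj_mem X (φ t x) (A t x v)
  · -- the domination estimate
    refine ⟨4 * K ^ 2 * C0, by positivity, lam, hlam, ?_⟩
    intro x hx hXne t ht u hu v hv
    obtain ⟨e, he, rfl⟩ := Submodule.mem_map.mp hu
    obtain ⟨hvF, hvN⟩ := hv
    -- decompose A t x v along X(φ t x)
    obtain ⟨c, hc⟩ := Submodule.mem_span_singleton.mp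
      (sub_normProj_mem X (φ t x) (A t x v))
    set v' : W := v - c • X x with hv'
    have hv'F : v' ∈ F x := Submodule.sub_mem _ hvF
      (Submodule.smul_mem _ c (hXF x hx))
    have hkey : A t x v' = linPoincare φ A X t x v := by
      rw [linPoincare_eq, hv', map_sub, map_smul, hXinv x t, hc]
      abel
    have hvnorm : ‖v‖ ≤ ‖v'‖ := norm_le_sub_smul X x hvN c
    have hu1 : ‖linPoincare φ A X t x ((normProj X x).toLinearMap e)‖ ≤ ‖A t x e‖ := by
      have h1 : linPoincare φ A X t x ((normProj X x).toLinearMap e) =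
          normProj X (φ t x) (A t x e) := hPA t x e
      rw [h1]
      exact normProj_norm_le X (φ t x) (A t x e)
    have hd := hdom x hx t ht e he v' hv'F
    have hE := hEproj x hx e he
    have hexp : (0 : ℝ) < Real.exp (-lam * t) := Real.exp_pos _
    have step1 : ‖linPoincare φ A X t x ((normProj X x).toLinearMap e)‖ * ‖v‖ ≤
        ‖A t x e‖ * ‖v'‖ :=
      mul_le_mul hu1 hvnorm (norm_nonneg v) (norm_nonneg _)
    have step2 : ‖A t x e‖ * ‖v'‖ ≤
        C0 * Real.exp (-lam * t) * (‖e‖ * ‖A t x v'‖) := hd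
    have step3 : C0 * Real.exp (-lam * t) * (‖e‖ * ‖A t x v'‖) ≤
        C0 * Real.exp (-lam * t) *
          ((4 * K ^ 2 * ‖normProj X x e‖) * ‖A t x v'‖) := by
      apply mul_le_mul_of_nonneg_left
        (mul_le_mul_of_nonneg_right hE (norm_nonneg _))
      positivity
    have hfin : C0 * Real.exp (-lam * t) *
        ((4 * K ^ 2 * ‖normProj X x e‖) * ‖A t x v'‖) =
        4 * K ^ 2 * C0 * Real.exp (-lam * t) *
          (‖(normProj X x).toLinearMap e‖ * ‖linPoincare φ A X t x v‖) := by
      rw [← hkey]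
      show C0 * Real.exp (-lam * t) * (4 * K ^ 2 * ‖normProj X x e‖ * ‖A t x v'‖) =
        4 * K ^ 2 * C0 * Real.exp (-lam * t) * (‖normProj X x e‖ * ‖A t x v'‖)
      ring
    calc ‖linPoincare φ A X t x ((normProj X x).toLinearMap e)‖ * ‖v‖ ≤
        ‖A t x e‖ * ‖v'‖ := step1
      _ ≤ C0 * Real.exp (-lam * t) * (‖e‖ * ‖A t x v'‖) := step2
      _ ≤ C0 * Real.exp (-lam * t) *
          ((4 * K ^ 2 * ‖normProj X x e‖) * ‖A t x v'‖) := step3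
      _ = 4 * K ^ 2 * C0 * Real.exp (-lam * t) *
          (‖(normProj X x).toLinearMap e‖ * ‖linPoincare φ A X t x v‖) := hfin
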